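/- Let p > q be odd primes and let Q be a right power alternative loop of order pq. Then Q has at most one subloop of order p. -/

import Mathlib

/-- A loop: binary operation with two-sided identity and bijective
left and right translations. -/
class LoopStr (Q : Type*) extends Mul Q, One Q where
  one_mul : ∀ a : Q, 1 * a = a
  mul_one : ∀ a : Q, a * 1 = a
  mulLeft_bij : ∀ a : Q, Function.Bijective (fun x : Q => a * x)
  mulRight_bij : ∀ a : Q, Function.Bijective (fun x : Q => x * a)

variable {Q : Type*} [LoopStr Q]

/-- The right translation `R_a : x ↦ x·a` as a permutation of `Q`. -/
noncomputable def Rt (a : Q) : Equiv.Perm Q :=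
  Equiv.ofBijective _ (LoopStr.mulRight_bij a)

/-- Natural powers in a loop. -/
def lpow (a : Q) : ℕ → Q
  | 0 => 1
  | n + 1 => lpow a n * a

/-- Integer powers in a loop with inverses. -/
def lzpow [Inv Q] (a : Q) : ℤ → Q
  | Int.ofNat n => lpow a n
  | Int.negSucc n => (lpow a (n + 1))⁻¹

/-- A subloop: a subset containing the identity and closed under
multiplication and both divisions. -/
structure Subloop (Q : Type*) [LoopStr Q] where
  carrier : Set Q
  one_mem : (1 : Q) ∈ carrier
  mul_mem : ∀ a ∈ carrier, ∀ b ∈ carrier, a * b ∈ carrier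
  ldiv_mem : ∀ a ∈ carrier, ∀ b ∈ carrier, ∀ x : Q, a * x = b → x ∈ carrier
  rdiv_mem : ∀ a ∈ carrier, ∀ b ∈ carrier, ∀ x : Q, x * a = b → x ∈ carrier

section Aux

lemma loop_mul_left_cancel {a x y : Q} (h : a * x = a * y) : x = y :=
  (LoopStr.mulLeft_bij a).injective h

lemma Rt_apply (a x : Q) : Rt a x = x * a := rfl

lemma Rt_inj : Function.Injective (Rt : Q → Equiv.Perm Q) := by
  intro a b h
  have h1 := congrArg (fun f : Equiv.Perm Q => f 1) h
  simpa [Rt_apply, LoopStr.one_mul] using h1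

lemma Rt_one : Rt (1 : Q) = 1 :=
  Equiv.ext fun x => LoopStr.mul_one x

lemma lzpow_natCast [Inv Q] (u : Q) (n : ℕ) : lzpow u (n : ℤ) = lpow u n := rfl

lemma Rt_lpow [Inv Q] (hrpa : ∀ u : Q, ∀ i : ℤ, (Rt u) ^ i = Rt (lzpow u i))
    (u : Q) (n : ℕ) : Rt (lpow u n) = Rt u ^ n := by
  have h := hrpa u (n : ℤ)
  rw [zpow_natCast, lzpow_natCast] at h
  exact h.symm

lemma lpow_eq_one_iff [Inv Q] (hrpa : ∀ u : Q, ∀ i : ℤ, (Rt u) ^ i = Rt (lzpow u i))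
    (u : Q) (n : ℕ) : lpow u n = 1 ↔ orderOf (Rt u) ∣ n := by
  constructor
  · intro h
    apply orderOf_dvd_of_pow_eq_one
    rw [← Rt_lpow hrpa, h, Rt_one]
  · intro h
    apply Rt_inj
    rw [Rt_lpow hrpa, Rt_one]
    exact orderOf_dvd_iff_pow_eq_one.1 h

lemma lpow_mem (S : Subloop Q) {u : Q} (hu : u ∈ S.carrier) (n : ℕ) :
    lpow u n ∈ S.carrier := by
  induction n with
  | zero => exact S.one_mem
  | succ n ih => exact S.mul_mem _ ih _ hu

lemma lzpow_mem [Inv Q] (hrpa : ∀ u : Q, ∀ i : ℤ, (Rt u) ^ i = Rt (lzpow u i))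
    (S : Subloop Q) {u : Q} (hu : u ∈ S.carrier) (i : ℤ) : lzpow u i ∈ S.carrier := by
  cases i with
  | ofNat n => exact lpow_mem S hu n
  | negSucc n =>
    have hw : lpow u (n + 1) ∈ S.carrier := lpow_mem S hu (n + 1)
    have hRt : Rt ((lpow u (n + 1))⁻¹) = (Rt (lpow u (n + 1)))⁻¹ := by
      have h := hrpa u (Int.negSucc n)
      rw [zpow_negSucc] at h
      rw [Rt_lpow hrpa]
      exact h.symm
    have h1 : Rt (lpow u (n + 1)) 1 = lpow u (n + 1) := LoopStr.one_mul _
    have hone : lpow u (n + 1) * (lpow u (n + 1))⁻¹ = 1 := by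
      calc lpow u (n + 1) * (lpow u (n + 1))⁻¹
          = Rt ((lpow u (n + 1))⁻¹) (lpow u (n + 1)) := rfl
        _ = (Rt (lpow u (n + 1)))⁻¹ (lpow u (n + 1)) := by rw [hRt]
        _ = 1 := by
            rw [Equiv.Perm.inv_def, Equiv.symm_apply_eq]
            exact h1.symm
    exact S.ldiv_mem _ hw _ S.one_mem _ hone

/-- The permutation of a subloop induced by right translation by an element of it. -/
noncomputable def subPerm (S : Subloop Q) {u : Q} (hu : u ∈ S.carrier) :
    Equiv.Perm S.carrier where
  toFun x := ⟨x.1 * u, S.mul_mem _ x.2 _ hu⟩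
  invFun x := ⟨(Rt u).symm x.1, S.rdiv_mem _ hu _ x.2 _ ((Rt u).apply_symm_apply x.1)⟩
  left_inv x := Subtype.ext ((Rt u).symm_apply_apply x.1)
  right_inv x := Subtype.ext ((Rt u).apply_symm_apply x.1)

lemma lpow_succ_reassoc [Inv Q] (hrpa : ∀ u : Q, ∀ i : ℤ, (Rt u) ^ i = Rt (lzpow u i))
    (u x : Q) (n : ℕ) : x * lpow u (n + 1) = (x * lpow u n) * u := by
  calc x * lpow u (n + 1) = Rt (lpow u (n + 1)) x := rfl
    _ = (Rt u ^ (n + 1)) x := by rw [Rt_lpow hrpa]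
    _ = Rt u ((Rt u ^ n) x) := by rw [pow_succ']; rfl
    _ = ((Rt u ^ n) x) * u := rfl
    _ = (Rt (lpow u n) x) * u := by rw [Rt_lpow hrpa]
    _ = (x * lpow u n) * u := rfl

lemma subPerm_pow [Inv Q] (hrpa : ∀ u : Q, ∀ i : ℤ, (Rt u) ^ i = Rt (lzpow u i))
    (S : Subloop Q) {u : Q} (hu : u ∈ S.carrier) (n : ℕ) (x : S.carrier) :
    ((subPerm S hu ^ n) x).1 = x.1 * lpow u n := by
  induction n with
  | zero =>
      show x.1 = x.1 * lpow u 0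
      exact (LoopStr.mul_one x.1).symm
  | succ n ih =>
      have h : (subPerm S hu ^ (n + 1)) x = subPerm S hu ((subPerm S hu ^ n) x) := by
        rw [pow_succ']; rfl
      rw [h, lpow_succ_reassoc hrpa, ← ih]
      rfl

lemma orderOf_subPerm [Inv Q] [Fintype Q]
    (hrpa : ∀ u : Q, ∀ i : ℤ, (Rt u) ^ i = Rt (lzpow u i))
    (S : Subloop Q) {u : Q} (hu : u ∈ S.carrier) :
    orderOf (subPerm S hu) = orderOf (Rt u) := by
  apply Nat.dvd_antisymm
  · apply orderOf_dvd_of_pow_eq_one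
    apply Equiv.ext
    intro x
    apply Subtype.ext
    have h := subPerm_pow hrpa S hu (orderOf (Rt u)) x
    rw [(lpow_eq_one_iff hrpa u _).2 dvd_rfl] at h
    rw [h]
    exact LoopStr.mul_one _
  · rw [← lpow_eq_one_iff hrpa]
    have h := congrArg (fun f : Equiv.Perm S.carrier => (f ⟨1, S.one_mem⟩).1)
      (pow_orderOf_eq_one (subPerm S hu))
    rw [subPerm_pow hrpa S hu] at h
    rw [← LoopStr.one_mul (lpow u (orderOf (subPerm S hu)))]
    exact h

lemma orderOf_dvd_ncard [Inv Q] [Fintype Q]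
    (hrpa : ∀ u : Q, ∀ i : ℤ, (Rt u) ^ i = Rt (lzpow u i))
    (S : Subloop Q) {u : Q} (hu : u ∈ S.carrier) :
    orderOf (Rt u) ∣ S.carrier.ncard := by
  classical
  set k := orderOf (Rt u) with hk
  set σ := subPerm S hu with hσ
  have hordσ : orderOf σ = k := orderOf_subPerm hrpa S hu
  set G := Subgroup.zpowers σ with hG
  have hk0 : 0 < k := by
    rw [hk]
    exact orderOf_pos (Rt u)
  -- stabilizers are trivial
  have hstab : ∀ x : S.carrier, MulAction.stabilizer G x = ⊥ := by
    intro x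
    rw [eq_bot_iff]
    intro g hg
    rw [Subgroup.mem_bot]
    obtain ⟨i, hi⟩ := Subgroup.mem_zpowers_iff.1 g.2
    have hfix : (σ ^ i) x = x := by
      rw [hi]
      have : g • x = x := hg
      exact this
    set r : ℕ := (i % (k : ℤ)).toNat with hr
    have hrnn : (0 : ℤ) ≤ i % (k : ℤ) := Int.emod_nonneg i (by exact_mod_cast hk0.ne')
    have hrc : (r : ℤ) = i % (k : ℤ) := Int.toNat_of_nonneg hrnn
    have hrlt : r < k := by
      have := Int.emod_lt_of_pos i (by exact_mod_cast hk0 : (0:ℤ) < (k:ℤ))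
      omega
    have hir : σ ^ i = σ ^ r := by
      rw [← zpow_natCast, hrc, ← hordσ, zpow_mod_orderOf]
    have hfixr : ((σ ^ r) x).1 = x.1 := by rw [← hir, hfix]
    rw [subPerm_pow hrpa S hu] at hfixr
    have hlp : lpow u r = 1 := loop_mul_left_cancel (a := x.1)
      (by rw [LoopStr.mul_one]; exact hfixr)
    have : k ∣ r := (lpow_eq_one_iff hrpa u r).1 hlp
    have hr0 : r = 0 := Nat.eq_zero_of_dvd_of_lt this hrlt
    have : σ ^ i = 1 := by rw [hir, hr0, pow_zero]
    exact Subtype.ext (hi ▸ this)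
  -- orbit sizes
  haveI : Fintype S.carrier := Fintype.ofFinite _
  haveI : Fintype (MulAction.orbitRel.Quotient G S.carrier) := Fintype.ofFinite _
  haveI : ∀ ω : MulAction.orbitRel.Quotient G S.carrier,
      Fintype (MulAction.orbit G (Quotient.out ω)) := fun ω => Fintype.ofFinite _
  have horb : ∀ x : S.carrier, Nat.card (MulAction.orbit G x) = k := by
    intro x
    rw [Nat.card_congr (MulAction.orbitEquivQuotientStabilizer G x), hstab x,
      Nat.card_congr (QuotientGroup.quotientBot (G := G)).toEquiv, ← hordσ]
    exact Nat.card_zpowers σ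
  have hcardS : S.carrier.ncard =
      Fintype.card (MulAction.orbitRel.Quotient G S.carrier) * k := by
    rw [← Nat.card_coe_set_eq, Nat.card_eq_fintype_card,
      Fintype.card_congr (MulAction.selfEquivSigmaOrbits G S.carrier),
      Fintype.card_sigma]
    rw [Finset.sum_congr rfl (fun ω _ => by
      rw [← Nat.card_eq_fintype_card, horb])]
    rw [Finset.sum_const, Finset.card_univ, smul_eq_mul]
  exact ⟨_, by rw [hcardS, Nat.mul_comm]⟩

lemma orderOf_Rt_eq_prime [Inv Q] [Fintype Q] {p : ℕ} (hp : p.Prime)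
    (hrpa : ∀ u : Q, ∀ i : ℤ, (Rt u) ^ i = Rt (lzpow u i))
    (S : Subloop Q) (hS : S.carrier.ncard = p)
    {u : Q} (hu : u ∈ S.carrier) (hu1 : u ≠ 1) : orderOf (Rt u) = p := by
  have hdvd := orderOf_dvd_ncard hrpa S hu
  rw [hS] at hdvd
  rcases (Nat.Prime.eq_one_or_self_of_dvd hp _ hdvd) with h | h
  · exfalso
    apply hu1
    have : Rt u = 1 := orderOf_eq_one_iff.1 h
    have := Rt_inj (this.trans Rt_one.symm)
    exact this
  · exact h

lemma carrier_eq_powers [Inv Q] [Fintype Q] {p : ℕ} (hp : p.Prime)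
    (hrpa : ∀ u : Q, ∀ i : ℤ, (Rt u) ^ i = Rt (lzpow u i))
    (S : Subloop Q) (hS : S.carrier.ncard = p)
    {u : Q} (hu : u ∈ S.carrier) (hu1 : u ≠ 1) :
    S.carrier = lpow u '' (Set.Iio p) := by
  have hord := orderOf_Rt_eq_prime hp hrpa S hS hu hu1
  have hsub : lpow u '' (Set.Iio p) ⊆ S.carrier := by
    rintro _ ⟨n, -, rfl⟩
    exact lpow_mem S hu n
  have hinj : Set.InjOn (lpow u) (Set.Iio p) := by
    intro i hi j hj hij
    have h : Rt u ^ i = Rt u ^ j := by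
      rw [← Rt_lpow hrpa, ← Rt_lpow hrpa, hij]
    exact pow_injOn_Iio_orderOf (by rwa [hord]) (by rwa [hord]) h
  have hcard : (lpow u '' (Set.Iio p)).ncard = p := by
    rw [Set.ncard_image_of_injOn hinj, ← Finset.coe_Iio, Set.ncard_coe_finset, Nat.card_Iio]
  exact (Set.eq_of_subset_of_ncard_le hsub (by rw [hS, hcard]) (Set.toFinite _)).symm

lemma Subloop.ext' {S T : Subloop Q} (h : S.carrier = T.carrier) : S = T := by
  cases S; cases T
  simp only at h
  subst h
  rfl

end Aux

/-- Let `p > q` be odd primes and `Q` a right power alternative loop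
(`R_u^i = R_{u^i}` for all integers `i`) of order `pq`. Then `Q` has at most
one subloop of order `p`. -/
theorem stmt3 {p q : ℕ} (hp : p.Prime) (hq : q.Prime) (hpo : Odd p) (hqo : Odd q)
    (hlt : q < p) (Q : Type*) [LoopStr Q] [Inv Q] [Fintype Q]
    (hcard : Fintype.card Q = p * q)
    (hrpa : ∀ u : Q, ∀ i : ℤ, (Rt u) ^ i = Rt (lzpow u i))
    (S₁ S₂ : Subloop Q) (h1 : S₁.carrier.ncard = p) (h2 : S₂.carrier.ncard = p) :
    S₁ = S₂ := by
  by_cases hW : ∃ w, w ∈ S₁.carrier ∧ w ∈ S₂.carrier ∧ w ≠ 1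
  · obtain ⟨w, hw1, hw2, hwne⟩ := hW
    exact Subloop.ext' ((carrier_eq_powers hp hrpa S₁ h1 hw1 hwne).trans
      (carrier_eq_powers hp hrpa S₂ h2 hw2 hwne).symm)
  · push_neg at hW
    exfalso
    have hp1 : 1 < p := hp.one_lt
    have hv : ∃ v ∈ S₂.carrier, v ≠ 1 := by
      by_contra h
      push_neg at h
      have hsub : S₂.carrier ⊆ {1} := fun x hx => h x hx
      have := Set.ncard_le_ncard hsub (Set.finite_singleton 1)
      rw [h2, Set.ncard_singleton] at this
      omega
    obtain ⟨v, hv2, hv1⟩ := hv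
    have hS2 := carrier_eq_powers hp hrpa S₂ h2 hv2 hv1
    have hordv := orderOf_Rt_eq_prime hp hrpa S₂ h2 hv2 hv1
    -- the multiplication map S₁ × S₂ → Q is injective
    have hfinj : Function.Injective
        (fun z : S₁.carrier × S₂.carrier => (z.1.1 * z.2.1 : Q)) := by
      rintro ⟨a, b⟩ ⟨a', b'⟩ hab
      simp only at hab
      obtain ⟨n, -, hbn⟩ : (b : Q) ∈ lpow v '' Set.Iio p := by
        rw [← hS2]
        exact b.2
      obtain ⟨m, -, hbm⟩ : (b' : Q) ∈ lpow v '' Set.Iio p := by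
        rw [← hS2]
        exact b'.2
      -- a' = a * c with c = lzpow v (n - m)
      set c : Q := lzpow v ((n : ℤ) - m) with hc
      have hac : a.1 * c = a'.1 := by
        have e1 : Rt c = (Rt v ^ ((m : ℤ)))⁻¹ * Rt v ^ ((n : ℤ)) := by
          rw [← (hrpa v ((n : ℤ) - m)), sub_eq_neg_add, zpow_add, zpow_neg]
        calc a.1 * c = Rt c a.1 := rfl
          _ = (Rt v ^ ((m : ℤ)))⁻¹ ((Rt v ^ ((n : ℤ))) a.1) := by rw [e1]; rfl
          _ = a'.1 := by
              have e2 : (Rt v ^ ((n : ℤ))) a.1 = (Rt v ^ ((m : ℤ))) a'.1 := by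
                rw [zpow_natCast, zpow_natCast, ← Rt_lpow hrpa, ← Rt_lpow hrpa]
                show a.1 * lpow v n = a'.1 * lpow v m
                rw [hbn, hbm]
                exact hab
              rw [e2]
              exact Equiv.symm_apply_apply _ _
      have hcS2 : c ∈ S₂.carrier := lzpow_mem hrpa S₂ hv2 _
      have hcS1 : c ∈ S₁.carrier := S₁.ldiv_mem _ a.2 _ a'.2 _ hac
      have hc1 : c = 1 := hW c hcS1 hcS2
      have haa : a = a' := Subtype.ext (by rw [← hac, hc1, LoopStr.mul_one])
      have hbb : b = b' := by
        apply Subtype.ext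
        apply loop_mul_left_cancel (a := a.1)
        rw [hab, haa]
      rw [haa, hbb]
    have hle := Nat.card_le_card_of_injective _ hfinj
    rw [Nat.card_prod, Nat.card_coe_set_eq, Nat.card_coe_set_eq, h1, h2,
      Nat.card_eq_fintype_card, hcard] at hle
    have := Nat.le_of_mul_le_mul_left hle hp.pos
    omega
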